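/- The polyache statistic h_{2,2} is an unbiased estimator of μ_2^2 (the square of the variance): for N ≥ 4 i.i.d. samples, E[h_{2,2}] = Var(X)^2, where h_{2,2} := (1/(N(N−1)(N−2)(N−3)))(S_1^4 − 2N S_1^2 S_2 + (N^2−3N+3)S_2^2 + (4N−4)S_1 S_3 + (−N^2+N)S_4). -/

import Mathlib

open MeasureTheory ProbabilityTheory Finset

lemma sum_poly4 {N : ℕ} (x : Fin N → ℝ) (c0 c1 c2 c3 c4 : ℝ) :
    ∑ j, (c0 + c1 * x j + c2 * x j ^ 2 + c3 * x j ^ 3 + c4 * x j ^ 4)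
      = N * c0 + c1 * (∑ j, x j) + c2 * (∑ j, x j ^ 2) + c3 * (∑ j, x j ^ 3)
        + c4 * (∑ j, x j ^ 4) := by
  rw [Finset.sum_add_distrib, Finset.sum_add_distrib, Finset.sum_add_distrib,
    Finset.sum_add_distrib, Finset.sum_const, Finset.card_univ, ← Finset.mul_sum,
    ← Finset.mul_sum, ← Finset.mul_sum, ← Finset.mul_sum, Fintype.card_fin, nsmul_eq_mul]

lemma key_alg (N : ℕ) (x : Fin N → ℝ) :
    ∑ i, ∑ j, ((x i - x j) ^ 2 *
        ∑ k ∈ Finset.univ \ {i, j}, ∑ l ∈ Finset.univ \ {i, j}, (x k - x l) ^ 2)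
      = 4 * ((∑ i, x i) ^ 4 - 2 * (N : ℝ) * (∑ i, x i) ^ 2 * (∑ i, x i ^ 2)
          + ((N : ℝ) ^ 2 - 3 * N + 3) * (∑ i, x i ^ 2) ^ 2
          + (4 * (N : ℝ) - 4) * (∑ i, x i) * (∑ i, x i ^ 3)
          + (-(N : ℝ) ^ 2 + N) * (∑ i, x i ^ 4)) := by
  have hR : ∀ i : Fin N, ∑ j, (x i - x j) ^ 2
      = N * x i ^ 2 - 2 * x i * (∑ j, x j) + (∑ j, x j ^ 2) := by
    intro i
    calc ∑ j, (x i - x j) ^ 2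
        = ∑ j, (x i ^ 2 + (-2 * x i) * x j + 1 * x j ^ 2 + 0 * x j ^ 3 + 0 * x j ^ 4) :=
          Finset.sum_congr rfl fun j _ => by ring
      _ = _ := by rw [sum_poly4]; ring
  have hR' : ∀ i : Fin N, ∑ k, (x k - x i) ^ 2
      = N * x i ^ 2 - 2 * x i * (∑ j, x j) + (∑ j, x j ^ 2) := by
    intro i
    rw [← hR i]
    exact Finset.sum_congr rfl fun k _ => by ring
  have hA : ∑ k, ∑ l, (x k - x l) ^ 2
      = 2 * N * (∑ j, x j ^ 2) - 2 * (∑ j, x j) ^ 2 := by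
    calc ∑ k, ∑ l, (x k - x l) ^ 2
        = ∑ k, ((∑ j, x j ^ 2) + (-2 * (∑ j, x j)) * x k + (N : ℝ) * x k ^ 2 + 0 * x k ^ 3
            + 0 * x k ^ 4) := Finset.sum_congr rfl fun k _ => by rw [hR k]; ring
      _ = _ := by rw [sum_poly4]; ring
  have hstep : ∀ i j : Fin N,
      ((x i - x j) ^ 2 *
        ∑ k ∈ Finset.univ \ {i, j}, ∑ l ∈ Finset.univ \ {i, j}, (x k - x l) ^ 2)
      = (x i - x j) ^ 2 * ((2 * N * (∑ m, x m ^ 2) - 2 * (∑ m, x m) ^ 2)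
          - 2 * ((N : ℝ) * x i ^ 2 - 2 * x i * (∑ m, x m) + (∑ m, x m ^ 2))
          - 2 * ((N : ℝ) * x j ^ 2 - 2 * x j * (∑ m, x m) + (∑ m, x m ^ 2))
          + 2 * (x i - x j) ^ 2) := by
    intro i j
    rcases eq_or_ne i j with rfl | hij
    · simp
    · have hpair : ∀ g : Fin N → ℝ,
          ∑ k ∈ Finset.univ \ {i, j}, g k = (∑ k, g k) - g i - g j := by
        intro g
        rw [Finset.sum_sdiff_eq_sub (Finset.subset_univ _), Finset.sum_pair hij]
        ring
      simp only [hpair]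
      rw [Finset.sum_sub_distrib, Finset.sum_sub_distrib, hA, hR i, hR j, hR' i, hR' j]
      have h0 : (x i - x i) ^ 2 = 0 := by ring
      have h0' : (x j - x j) ^ 2 = 0 := by ring
      have hsymm : (x j - x i) ^ 2 = (x i - x j) ^ 2 := by ring
      rw [h0, h0', hsymm]
      ring
  calc ∑ i, ∑ j, ((x i - x j) ^ 2 *
        ∑ k ∈ Finset.univ \ {i, j}, ∑ l ∈ Finset.univ \ {i, j}, (x k - x l) ^ 2)
      = ∑ i, (((2:ℝ) * (∑ m, x m ^ 4) - 2 * N * (∑ m, x m ^ 4) - 4 * (∑ m, x m ^ 2) ^ 2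
            + 2 * N * (∑ m, x m ^ 2) ^ 2 + 4 * (∑ m, x m) * (∑ m, x m ^ 3)
            - 2 * (∑ m, x m) ^ 2 * (∑ m, x m ^ 2))
          + (-8 * (∑ m, x m ^ 3) + 4 * N * (∑ m, x m ^ 3) + 4 * (∑ m, x m) * (∑ m, x m ^ 2)
            - 4 * N * (∑ m, x m) * (∑ m, x m ^ 2) + 4 * (∑ m, x m) ^ 3) * x i
          + (12 * (∑ m, x m ^ 2) - 8 * N * (∑ m, x m ^ 2) + 2 * (N:ℝ) ^ 2 * (∑ m, x m ^ 2)
            - 4 * (∑ m, x m) ^ 2 - 2 * N * (∑ m, x m) ^ 2) * x i ^ 2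
          + (-8 * (∑ m, x m) + 8 * N * (∑ m, x m)) * x i ^ 3
          + (2 * (N:ℝ) - 2 * (N:ℝ) ^ 2) * x i ^ 4) := by
        refine Finset.sum_congr rfl fun i _ => ?_
        calc ∑ j, ((x i - x j) ^ 2 *
              ∑ k ∈ Finset.univ \ {i, j}, ∑ l ∈ Finset.univ \ {i, j}, (x k - x l) ^ 2)
            = ∑ j, (((-4:ℝ) * x i ^ 2 * (∑ m, x m ^ 2) + 2 * N * x i ^ 2 * (∑ m, x m ^ 2)
                - 2 * x i ^ 2 * (∑ m, x m) ^ 2 + 4 * x i ^ 3 * (∑ m, x m) + 2 * x i ^ 4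
                - 2 * N * x i ^ 4)
              + (8 * x i * (∑ m, x m ^ 2) - 4 * N * x i * (∑ m, x m ^ 2)
                + 4 * x i * (∑ m, x m) ^ 2 - 4 * x i ^ 2 * (∑ m, x m) - 8 * x i ^ 3
                + 4 * N * x i ^ 3) * x j
              + (-4 * (∑ m, x m ^ 2) + 2 * N * (∑ m, x m ^ 2) - 2 * (∑ m, x m) ^ 2
                - 4 * x i * (∑ m, x m) + 12 * x i ^ 2 - 4 * N * x i ^ 2) * x j ^ 2
              + (4 * (∑ m, x m) - 8 * x i + 4 * N * x i) * x j ^ 3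
              + (2 - 2 * (N:ℝ)) * x j ^ 4) := by
              refine Finset.sum_congr rfl fun j _ => ?_
              rw [hstep i j]; ring
          _ = _ := by rw [sum_poly4]; ring
    _ = _ := by rw [sum_poly4]; ring


lemma int_mul_of_L2 {Ω : Type*} [MeasureSpace Ω] {f g : Ω → ℝ}
    (hf : MemLp f 2 ℙ) (hg : MemLp g 2 ℙ) :
    Integrable (fun ω => f ω * g ω) ℙ := by
  have h := hf.smul (φ := g) (p := 2) (q := 2) (r := 1) hg (hpqr := ?_)
  · have : (g • f) = fun ω => f ω * g ω := by
      funext ω; simp [mul_comm]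
    rw [this] at h
    exact memLp_one_iff_integrable.mp h
  · exact inferInstance

lemma sq_L2_of_L4 {Ω : Type*} [MeasureSpace Ω] {f : Ω → ℝ} (hf : MemLp f 4 ℙ) :
    MemLp (fun ω => f ω ^ 2) 2 ℙ := by
  have h := hf.smul (φ := f) (p := 4) (q := 4) (r := 2) hf (hpqr := ?_)
  · have : (f • f) = fun ω => f ω ^ 2 := by funext ω; simp [sq]
    rwa [this] at h
  · refine ⟨?_⟩
    rw [show (4:ENNReal) = 2*2 by norm_num, ENNReal.mul_inv (by simp) (by simp), ← two_mul,
      ← mul_assoc, ENNReal.mul_inv_cancel (by simp) (by simp), one_mul]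

lemma aux_main {Ω : Type*} [MeasureSpace Ω] [IsProbabilityMeasure (ℙ : Measure Ω)]
    (N : ℕ) (hN : 4 ≤ N) (X : Fin N → Ω → ℝ) (i0 : Fin N)
    (hmeas : ∀ i, Measurable (X i))
    (hindep : iIndepFun X ℙ)
    (hident : ∀ i, IdentDistrib (X i) (X i0) ℙ ℙ)
    (hL4 : ∀ i, MemLp (X i) 4 ℙ) :
    ∫ ω, ∑ i, ∑ j, ((X i ω - X j ω) ^ 2 *
        ∑ k ∈ Finset.univ \ {i, j}, ∑ l ∈ Finset.univ \ {i, j}, (X k ω - X l ω) ^ 2) ∂ℙ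
      = (N : ℝ) * ((N : ℝ) - 1) * ((N : ℝ) - 2) * ((N : ℝ) - 3)
        * (4 * (variance (X i0) ℙ) ^ 2) := by
  have hL2 : ∀ i, MemLp (X i) 2 ℙ :=
    fun i => (hL4 i).mono_exponent (by norm_num)
  have hint1 : ∀ i, Integrable (X i) ℙ := fun i => (hL4 i).integrable (by norm_num)
  have hsub4 : ∀ i j, MemLp (fun ω => X i ω - X j ω) 4 ℙ := fun i j => (hL4 i).sub (hL4 j)
  have hsq2 : ∀ i j, MemLp (fun ω => (X i ω - X j ω) ^ 2) 2 ℙ :=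
    fun i j => sq_L2_of_L4 (hsub4 i j)
  have hint2 : ∀ i j k l, Integrable
      (fun ω => (X i ω - X j ω) ^ 2 * (X k ω - X l ω) ^ 2) ℙ :=
    fun i j k l => int_mul_of_L2 (hsq2 i j) (hsq2 k l)
  set V := variance (X i0) ℙ with hV
  -- mean of (X i - X j)^2 is 2V for i ≠ j
  have hmean : ∀ i j : Fin N, i ≠ j → ∫ ω, (X i ω - X j ω) ^ 2 ∂ℙ = 2 * V := by
    intro i j hij
    have hrw : (fun ω => (X i ω - X j ω) ^ 2)
        = fun ω => X i ω ^ 2 - 2 * (X i ω * X j ω) + X j ω ^ 2 :=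
      funext fun ω => by ring
    have hmulint : Integrable (fun ω => 2 * (X i ω * X j ω)) ℙ :=
      (int_mul_of_L2 (hL2 i) (hL2 j)).const_mul 2
    have h1 : Integrable (fun ω => X i ω ^ 2 - 2 * (X i ω * X j ω)) ℙ :=
      ((hL2 i).integrable_sq).sub hmulint
    rw [hrw, integral_add h1 ((hL2 j).integrable_sq),
      integral_sub ((hL2 i).integrable_sq) hmulint, MeasureTheory.integral_const_mul]
    have hXY : ∫ ω, X i ω * X j ω ∂ℙ = (∫ ω, X i ω ∂ℙ) * ∫ ω, X j ω ∂ℙ :=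
      (hindep.indepFun hij).integral_mul_eq_mul_integral (hint1 i).1 (hint1 j).1
    have hm1 : ∀ k : Fin N, ∫ ω, X k ω ∂ℙ = ∫ ω, X i0 ω ∂ℙ := fun k =>
      (hident k).integral_eq
    have hm2 : ∀ k : Fin N, ∫ ω, X k ω ^ 2 ∂ℙ = ∫ ω, X i0 ω ^ 2 ∂ℙ := fun k =>
      ((hident k).comp (measurable_id.pow_const 2)).integral_eq
    have hvar : V = ∫ ω, X i0 ω ^ 2 ∂ℙ - (∫ ω, X i0 ω ∂ℙ) ^ 2 := by
      rw [hV, variance_eq_sub (hL2 i0)]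
      congr 1
    rw [hXY, hm1 i, hm1 j, hm2 i, hm2 j, hvar]
    ring
  -- integral of product for distinct indices
  have hterm : ∀ i j k l : Fin N, i ≠ j → k ≠ l → i ≠ k → i ≠ l → j ≠ k → j ≠ l →
      ∫ ω, (X i ω - X j ω) ^ 2 * (X k ω - X l ω) ^ 2 ∂ℙ = 4 * V ^ 2 := by
    intro i j k l hij hkl hik hil hjk hjl
    have hpair := hindep.indepFun_prodMk_prodMk hmeas i j k l hik hil hjk hjl
    have hg : Measurable (fun p : ℝ × ℝ => (p.1 - p.2) ^ 2) := by fun_prop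
    have hind2 : IndepFun (fun ω => (X i ω - X j ω) ^ 2)
        (fun ω => (X k ω - X l ω) ^ 2) ℙ := hpair.comp hg hg
    have := hind2.integral_mul_eq_mul_integral
      ((hsq2 i j).integrable one_le_two).1 ((hsq2 k l).integrable one_le_two).1
    have hmul : (fun ω => (X i ω - X j ω) ^ 2) * (fun ω => (X k ω - X l ω) ^ 2)
        = fun ω => (X i ω - X j ω) ^ 2 * (X k ω - X l ω) ^ 2 := rfl
    rw [hmul] at this
    rw [this, hmean i j hij, hmean k l hkl]
    ring
  -- integrability of partial sums
  have hint_l : ∀ i j k : Fin N, Integrable (fun ω =>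
      ∑ l ∈ Finset.univ \ {i, j}, (X i ω - X j ω) ^ 2 * (X k ω - X l ω) ^ 2) ℙ :=
    fun i j k => integrable_finset_sum _ fun l _ => hint2 i j k l
  have hint_kl : ∀ i j : Fin N, Integrable (fun ω => ∑ k ∈ Finset.univ \ {i, j},
      ∑ l ∈ Finset.univ \ {i, j}, (X i ω - X j ω) ^ 2 * (X k ω - X l ω) ^ 2) ℙ :=
    fun i j => integrable_finset_sum _ fun k _ => hint_l i j k
  have hint_j : ∀ i : Fin N, Integrable (fun ω => ∑ j, ∑ k ∈ Finset.univ \ {i, j},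
      ∑ l ∈ Finset.univ \ {i, j}, (X i ω - X j ω) ^ 2 * (X k ω - X l ω) ^ 2) ℙ :=
    fun i => integrable_finset_sum _ fun j _ => hint_kl i j
  -- the value of the inner double sum of integrals, for i ≠ j
  have hinner : ∀ i j : Fin N, i ≠ j →
      ∑ k ∈ Finset.univ \ {i, j}, ∑ l ∈ Finset.univ \ {i, j},
        (∫ ω, (X i ω - X j ω) ^ 2 * (X k ω - X l ω) ^ 2 ∂ℙ)
      = ((N : ℝ) - 2) * ((N : ℝ) - 3) * (4 * V ^ 2) := by
    intro i j hij
    have hcard : (Finset.univ \ {i, j} : Finset (Fin N)).card = N - 2 := by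
      rw [Finset.card_sdiff_of_subset (Finset.subset_univ _), Finset.card_univ, Fintype.card_fin,
        Finset.card_pair hij]
    calc ∑ k ∈ Finset.univ \ {i, j}, ∑ l ∈ Finset.univ \ {i, j},
          (∫ ω, (X i ω - X j ω) ^ 2 * (X k ω - X l ω) ^ 2 ∂ℙ)
        = ∑ k ∈ Finset.univ \ {i, j}, ∑ l ∈ Finset.univ \ {i, j},
            (4 * V ^ 2 - if k = l then 4 * V ^ 2 else 0) := by
          refine Finset.sum_congr rfl fun k hk => Finset.sum_congr rfl fun l hl => ?_
          simp only [Finset.mem_sdiff, Finset.mem_univ, Finset.mem_insert,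
            Finset.mem_singleton, true_and, not_or] at hk hl
          rcases eq_or_ne k l with rfl | hkl
          · simp
          · rw [if_neg hkl]
            rw [hterm i j k l hij hkl (fun h => hk.1 h.symm) (fun h => hl.1 h.symm)
              (fun h => hk.2 h.symm) (fun h => hl.2 h.symm)]
            ring
      _ = ∑ k ∈ Finset.univ \ {i, j}, (((N : ℝ) - 2) * (4 * V ^ 2) - 4 * V ^ 2) := by
          refine Finset.sum_congr rfl fun k hk => ?_
          rw [Finset.sum_sub_distrib, Finset.sum_const, Finset.sum_ite_eq _ k
            (fun _ => 4 * V ^ 2), if_pos hk, hcard, nsmul_eq_mul,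
            Nat.cast_sub (by omega : 2 ≤ N)]
          push_cast
          ring
      _ = _ := by
          rw [Finset.sum_const, hcard, nsmul_eq_mul, Nat.cast_sub (by omega : 2 ≤ N)]
          push_cast
          ring
  calc ∫ ω, ∑ i, ∑ j, ((X i ω - X j ω) ^ 2 *
        ∑ k ∈ Finset.univ \ {i, j}, ∑ l ∈ Finset.univ \ {i, j}, (X k ω - X l ω) ^ 2) ∂ℙ
      = ∫ ω, ∑ i, ∑ j, ∑ k ∈ Finset.univ \ {i, j}, ∑ l ∈ Finset.univ \ {i, j},
          (X i ω - X j ω) ^ 2 * (X k ω - X l ω) ^ 2 ∂ℙ := by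
        refine integral_congr_ae (Filter.Eventually.of_forall fun ω => ?_)
        refine Finset.sum_congr rfl fun i _ => Finset.sum_congr rfl fun j _ => ?_
        rw [Finset.mul_sum]
        exact Finset.sum_congr rfl fun k _ => Finset.mul_sum _ _ _
    _ = ∑ i, ∑ j, ∑ k ∈ Finset.univ \ {i, j}, ∑ l ∈ Finset.univ \ {i, j},
          (∫ ω, (X i ω - X j ω) ^ 2 * (X k ω - X l ω) ^ 2 ∂ℙ) := by
        rw [integral_finset_sum _ fun i _ => hint_j i]
        refine Finset.sum_congr rfl fun i _ => ?_
        rw [integral_finset_sum _ fun j _ => hint_kl i j]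
        refine Finset.sum_congr rfl fun j _ => ?_
        rw [integral_finset_sum _ fun k _ => hint_l i j k]
        refine Finset.sum_congr rfl fun k _ => ?_
        rw [integral_finset_sum _ fun l _ => hint2 i j k l]
    _ = ∑ i : Fin N, ∑ j : Fin N,
          (((N : ℝ) - 2) * ((N : ℝ) - 3) * (4 * V ^ 2)
            - if i = j then ((N : ℝ) - 2) * ((N : ℝ) - 3) * (4 * V ^ 2) else 0) := by
        refine Finset.sum_congr rfl fun i _ => Finset.sum_congr rfl fun j _ => ?_
        rcases eq_or_ne i j with rfl | hij
        · rw [if_pos rfl]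
          rw [Finset.sum_eq_zero fun k _ => Finset.sum_eq_zero fun l _ => ?_]
          · ring
          · simp
        · rw [if_neg hij, hinner i j hij]
          ring
    _ = _ := by
        have : ∀ i : Fin N, ∑ j : Fin N,
            (((N : ℝ) - 2) * ((N : ℝ) - 3) * (4 * V ^ 2)
              - if i = j then ((N : ℝ) - 2) * ((N : ℝ) - 3) * (4 * V ^ 2) else 0)
            = ((N : ℝ) - 1) * (((N : ℝ) - 2) * ((N : ℝ) - 3) * (4 * V ^ 2)) := by
          intro i
          rw [Finset.sum_sub_distrib, Finset.sum_const, Finset.card_univ, Fintype.card_fin,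
            Finset.sum_ite_eq _ i (fun _ => ((N : ℝ) - 2) * ((N : ℝ) - 3) * (4 * V ^ 2)),
            if_pos (Finset.mem_univ i), nsmul_eq_mul]
          ring
        rw [Finset.sum_congr rfl fun i _ => this i, Finset.sum_const, Finset.card_univ,
          Fintype.card_fin, nsmul_eq_mul]
        ring

lemma iIndepFun_congr_ae {Ω ι : Type*} {mΩ : MeasurableSpace Ω} {μ : Measure Ω}
    {f g : ι → Ω → ℝ} (hf : iIndepFun f μ)
    (hfg : ∀ i, f i =ᵐ[μ] g i) : iIndepFun g μ := by
  rw [iIndepFun_iff_measure_inter_preimage_eq_mul] at hf ⊢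
  intro S sets hsets
  have h1 : ∀ i : ι, μ (g i ⁻¹' sets i) = μ (f i ⁻¹' sets i) := by
    intro i
    refine measure_congr ?_
    rw [Filter.eventuallyEq_set]
    filter_upwards [hfg i] with ω hω
    simp [Set.mem_preimage, hω]
  have h2 : μ (⋂ i ∈ S, g i ⁻¹' sets i) = μ (⋂ i ∈ S, f i ⁻¹' sets i) := by
    refine measure_congr ?_
    rw [Filter.eventuallyEq_set]
    have hball : ∀ᵐ ω ∂μ, ∀ i ∈ (S : Set ι), f i ω = g i ω :=
      (ae_ball_iff S.countable_toSet).mpr fun i _ => hfg i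
    filter_upwards [hball] with ω hω
    simp only [Set.mem_iInter, Set.mem_preimage]
    exact forall₂_congr fun i hi => by rw [hω i hi]
  rw [h2, hf S hsets]
  exact Finset.prod_congr rfl fun i _ => (h1 i).symm

/-- The polyache statistic `h_{2,2}` is an unbiased estimator of `μ₂² = Var(X)²`:
for `N ≥ 4` i.i.d. samples, `E[h_{2,2}] = Var(X)²`, where `h_{2,2}` is expressed via the
power sums `S r = ∑ i, (X i)^r`. -/
theorem h22_unbiased {Ω : Type*} [MeasureSpace Ω]
    [IsProbabilityMeasure (ℙ : Measure Ω)]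
    (N : ℕ) (hN : 4 ≤ N) (X : Fin N → Ω → ℝ)
    (hindep : iIndepFun X ℙ)
    (hident : ∀ i, IdentDistrib (X i) (X ⟨0, by omega⟩) ℙ ℙ)
    (hL4 : ∀ i, MemLp (X i) 4 ℙ)
    (S : ℕ → Ω → ℝ) (hS : ∀ r ω, S r ω = ∑ i, (X i ω) ^ r) :
    ∫ ω, ((N : ℝ) * ((N : ℝ) - 1) * ((N : ℝ) - 2) * ((N : ℝ) - 3))⁻¹ *
        ((S 1 ω) ^ 4 - 2 * N * (S 1 ω) ^ 2 * S 2 ω + ((N : ℝ) ^ 2 - 3 * N + 3) * (S 2 ω) ^ 2 +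
          (4 * (N : ℝ) - 4) * S 1 ω * S 3 ω + (-(N : ℝ) ^ 2 + N) * S 4 ω) ∂ℙ =
      (variance (X ⟨0, by omega⟩) ℙ) ^ 2 := by
  set i0 : Fin N := ⟨0, by omega⟩ with hi0
  -- measurable modifications
  set Y : Fin N → Ω → ℝ := fun i => ((hL4 i).1).mk (X i) with hY
  have hXY : ∀ i, X i =ᵐ[ℙ] Y i := fun i => ((hL4 i).1).ae_eq_mk
  have hYmeas : ∀ i, Measurable (Y i) := fun i =>
    ((hL4 i).1).stronglyMeasurable_mk.measurable
  have hYindep : iIndepFun Y ℙ := iIndepFun_congr_ae hindep hXY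
  have hYL4 : ∀ i, MemLp (Y i) 4 ℙ := fun i => (hL4 i).ae_eq (hXY i)
  have hXYid : ∀ i, IdentDistrib (X i) (Y i) ℙ ℙ := fun i =>
    ⟨(hL4 i).aestronglyMeasurable.aemeasurable, (hYmeas i).aemeasurable,
      Measure.map_congr (hXY i)⟩
  have hYident : ∀ i, IdentDistrib (Y i) (Y i0) ℙ ℙ := fun i =>
    ((hXYid i).symm.trans (hident i)).trans (hXYid i0)
  have hvar : variance (X i0) ℙ = variance (Y i0) ℙ := (hXYid i0).variance_eq
  have hmain := aux_main N hN Y i0 hYmeas hYindep hYident hYL4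
  set c : ℝ := (N : ℝ) * ((N : ℝ) - 1) * ((N : ℝ) - 2) * ((N : ℝ) - 3) with hc
  have hae : ∀ᵐ ω ∂ℙ, ∀ i, X i ω = Y i ω := ae_all_iff.mpr hXY
  calc ∫ ω, c⁻¹ *
        ((S 1 ω) ^ 4 - 2 * N * (S 1 ω) ^ 2 * S 2 ω + ((N : ℝ) ^ 2 - 3 * N + 3) * (S 2 ω) ^ 2 +
          (4 * (N : ℝ) - 4) * S 1 ω * S 3 ω + (-(N : ℝ) ^ 2 + N) * S 4 ω) ∂ℙ
      = ∫ ω, (c⁻¹ * 4⁻¹) * ∑ i, ∑ j, ((Y i ω - Y j ω) ^ 2 *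
          ∑ k ∈ Finset.univ \ {i, j}, ∑ l ∈ Finset.univ \ {i, j}, (Y k ω - Y l ω) ^ 2) ∂ℙ := by
        refine integral_congr_ae ?_
        filter_upwards [hae] with ω hω
        have hsum : ∀ r : ℕ, ∑ i, X i ω ^ r = ∑ i, Y i ω ^ r :=
          fun r => Finset.sum_congr rfl fun i _ => by rw [hω i]
        have hk := key_alg N (fun i => Y i ω)
        simp only [hS]
        simp only [hsum]
        simp only [pow_one]
        rw [hk]
        ring
    _ = (c⁻¹ * 4⁻¹) * ∫ ω, ∑ i, ∑ j, ((Y i ω - Y j ω) ^ 2 *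
          ∑ k ∈ Finset.univ \ {i, j}, ∑ l ∈ Finset.univ \ {i, j}, (Y k ω - Y l ω) ^ 2) ∂ℙ :=
        MeasureTheory.integral_const_mul _ _
    _ = (variance (X i0) ℙ) ^ 2 := by
        rw [hmain, ← hvar]
        have h4 : (4 : ℝ) ≤ (N : ℝ) := by exact_mod_cast hN
        have hc0 : c ≠ 0 := by
          rw [hc]
          have h1 : (0:ℝ) < (N : ℝ) := by linarith
          have h2 : (0:ℝ) < (N : ℝ) - 1 := by linarith
          have h3 : (0:ℝ) < (N : ℝ) - 2 := by linarith
          have h5 : (0:ℝ) < (N : ℝ) - 3 := by linarith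
          positivity
        field_simp [hc]
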